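/- Let α, β, κ be cardinals with ω ≤ κ ≤ β ≤ 2^α. Then d(((D(α))^β)_κ) = α^{<κ}. -/

import Mathlib

open Cardinal TopologicalSpace Set Topology

universe u

/-- The `κ`-box topology on a product of topological spaces: generated by the boxes
`Π i, U i` with each `U i` open and fewer than `κ` coordinates restricted. -/
def boxTopology (κ : Cardinal.{u}) {ι : Type u} (X : ι → Type u)
    [∀ i, TopologicalSpace (X i)] : TopologicalSpace (∀ i, X i) :=
  TopologicalSpace.generateFrom
    {S | ∃ U : ∀ i, Set (X i), (∀ i, IsOpen (U i)) ∧
      #{i | U i ≠ Set.univ} < κ ∧ S = Set.pi Set.univ U}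

/-- The density character of a topological space: the least cardinality of a dense subset
(finite values allowed). -/
noncomputable def dens (X : Type u) [TopologicalSpace X] : Cardinal.{u} :=
  sInf {c | ∃ D : Set X, Dense D ∧ #D = c}

namespace Stmt8


variable {κ : Cardinal.{u}} {A B : Type u}

lemma isOpen_box [TopologicalSpace A] [DiscreteTopology A] (U : B → Set A)
    (hU : #{i | U i ≠ Set.univ} < κ) :
    IsOpen[boxTopology κ fun _ : B => A] (Set.pi Set.univ U) :=
  TopologicalSpace.GenerateOpen.basic _ ⟨U, fun i => isOpen_discrete _, hU, rfl⟩

lemma exists_box [TopologicalSpace A] (hκ : ℵ₀ ≤ κ) {s : Set (B → A)}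
    (hs : IsOpen[boxTopology κ fun _ : B => A] s) :
    ∀ x ∈ s, ∃ U : B → Set A, #{i | U i ≠ Set.univ} < κ ∧
      x ∈ Set.pi Set.univ U ∧ Set.pi Set.univ U ⊆ s := by
  have hs' : TopologicalSpace.GenerateOpen
      {S | ∃ U : ∀ _ : B, Set A, (∀ i, IsOpen (U i)) ∧
        #{i | U i ≠ Set.univ} < κ ∧ S = Set.pi Set.univ U} s := hs
  clear hs
  induction hs' with
  | basic S hS =>
    obtain ⟨U, -, hU, rfl⟩ := hS
    exact fun x hx => ⟨U, hU, hx, subset_rfl⟩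
  | univ =>
    intro x _
    refine ⟨fun _ => Set.univ, ?_, by simp, by simp⟩
    have he : {i : B | (Set.univ : Set A) ≠ Set.univ} = ∅ := by simp
    rw [he]
    simpa using aleph0_pos.trans_le hκ
  | inter s₁ s₂ h₁ h₂ ih₁ ih₂ =>
    intro x hx
    obtain ⟨U₁, hU₁, hx₁, hs₁⟩ := ih₁ x hx.1
    obtain ⟨U₂, hU₂, hx₂, hs₂⟩ := ih₂ x hx.2
    refine ⟨fun i => U₁ i ∩ U₂ i, ?_, ?_, ?_⟩
    · have hsub : {i | U₁ i ∩ U₂ i ≠ Set.univ} ⊆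
          {i | U₁ i ≠ Set.univ} ∪ {i | U₂ i ≠ Set.univ} := by
        intro i hi
        by_contra hcon
        simp only [Set.mem_union, Set.mem_setOf_eq, not_or, not_not] at hcon
        exact hi (by simp [Set.mem_setOf_eq, hcon.1, hcon.2])
      calc #{i | U₁ i ∩ U₂ i ≠ Set.univ}
          ≤ #(↥({i | U₁ i ≠ Set.univ} ∪ {i | U₂ i ≠ Set.univ})) := mk_le_mk_of_subset hsub
        _ ≤ #{i | U₁ i ≠ Set.univ} + #{i | U₂ i ≠ Set.univ} := mk_union_le _ _
        _ < κ := add_lt_of_lt hκ hU₁ hU₂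
    · rw [Set.mem_univ_pi]
      exact fun i => ⟨hx₁ i trivial, hx₂ i trivial⟩
    · intro y hy
      rw [Set.mem_univ_pi] at hy
      exact ⟨hs₁ fun i _ => (hy i).1, hs₂ fun i _ => (hy i).2⟩
  | sUnion S hS ih =>
    intro x hx
    obtain ⟨t, htS, hxt⟩ := hx
    obtain ⟨U, hU, hxU, hUt⟩ := ih t htS x hxt
    exact ⟨U, hU, hxU, hUt.trans (Set.subset_sUnion_of_mem htS)⟩

lemma dense_of_boxes [TopologicalSpace A] [DiscreteTopology A] (hκ : ℵ₀ ≤ κ)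
    {D : Set (B → A)}
    (h : ∀ T : Set B, #T < κ → ∀ q : B → A, ∃ d ∈ D, ∀ t ∈ T, d t = q t) :
    @Dense _ (boxTopology κ fun _ => A) D := by
  refine (@dense_iff_inter_open _ (boxTopology κ fun _ => A) D).mpr ?_
  rintro U hU ⟨x, hx⟩
  obtain ⟨V, hV, hxV, hVU⟩ := exists_box hκ hU x hx
  obtain ⟨d, hdD, hdt⟩ := h {i | V i ≠ Set.univ} hV x
  refine ⟨d, hVU ?_, hdD⟩
  rw [Set.mem_univ_pi]
  intro i
  by_cases hi : V i = Set.univ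
  · rw [hi]; trivial
  · rw [hdt i hi]
    exact hxV i trivial



noncomputable def sep (e : B → A → Bool) (a₀ : A) (x y : B) : A :=
  @dite A (∃ a, e x a ≠ e y a) (Classical.dec _) (fun h => h.choose) (fun _ => a₀)

lemma sep_spec {e : B → A → Bool} {a₀ : A} {x y : B} (hxy : e x ≠ e y) :
    e x (sep e a₀ x y) ≠ e y (sep e a₀ x y) := by
  have h : ∃ a, e x a ≠ e y a := Function.ne_iff.mp hxy
  rw [sep, dif_pos h]
  exact h.choose_spec

noncomputable def dpoint (e : B → A → Bool) (a₀ : A) {ι : Type u}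
    (s : ι → A) (k : ι → ι → Bool) (g : ι → A) (t : B) : A :=
  @dite A (∃ j, (fun i => e t (s i)) = k j) (Classical.dec _) (fun h => g h.choose)
    (fun _ => a₀)

noncomputable def otypein (o : Ordinal.{u}) (j : o.ToType) : Ordinal.{u} :=
  @Ordinal.typein o.ToType (· < ·) isWellOrder_lt j

lemma otypein_lt (o : Ordinal.{u}) (j : o.ToType) : otypein o j < o := by
  have h := @Ordinal.typein_lt_type o.ToType (· < ·) isWellOrder_lt j
  rwa [Ordinal.type_toType] at h

lemma otypein_surj (o : Ordinal.{u}) {p : Ordinal.{u}} (hp : p < o) :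
    ∃ j, otypein o j = p := by
  have h := @Ordinal.typein_surj o.ToType (· < ·) isWellOrder_lt p
    (by rwa [Ordinal.type_toType])
  exact h

lemma exists_dense_set (hκ : ℵ₀ ≤ κ) [Nonempty A] (e : B ↪ (A → Bool))
    (h2 : (2 : Cardinal) ≤ #A) :
    ∃ D : Set (B → A), (∀ T : Set B, #T < κ → ∀ q : B → A, ∃ d ∈ D, ∀ t ∈ T, d t = q t)
      ∧ #D ≤ #A ^< κ := by
  classical
  set a₀ : A := Classical.arbitrary A with ha₀
  have hγ : #(κ.ord.ToType) = κ := by rw [Cardinal.mk_toType, Cardinal.card_ord]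
  haveI hγne : Nonempty κ.ord.ToType := by
    rw [← Cardinal.mk_ne_zero_iff, hγ]
    exact (aleph0_pos.trans_le hκ).ne'
  set P : κ.ord.ToType → Type u :=
    fun j => ((otypein κ.ord j).card).out with hP
  have hPcard : ∀ j : κ.ord.ToType, #(P j) = (otypein κ.ord j).card :=
    fun j => Cardinal.mk_out _
  have hPlt : ∀ j : κ.ord.ToType, #(P j) < κ := by
    intro j
    rw [hPcard j]
    exact Cardinal.lt_ord.mp (otypein_lt κ.ord j)
  set F : ∀ j : κ.ord.ToType, ((P j → A) × (P j → P j → Bool) × (P j → A)) → (B → A) :=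
    fun j d => dpoint e a₀ d.1 d.2.1 d.2.2 with hF
  refine ⟨⋃ j : κ.ord.ToType, Set.range (F j), ?_, ?_⟩
  · intro T hT q
    rcases T.eq_empty_or_nonempty with rfl | hTne
    · obtain ⟨j⟩ := hγne
      exact ⟨F j ⟨fun _ => a₀, fun _ _ => false, fun _ => a₀⟩,
        Set.mem_iUnion.mpr ⟨j, Set.mem_range_self _⟩, by simp⟩
    · have hν : #(↥T × ↥T) < κ := by
        simp only [Cardinal.mk_prod, Cardinal.lift_id]
        exact Cardinal.mul_lt_of_lt hκ hT hT
      obtain ⟨j, hj⟩ := otypein_surj κ.ord (Cardinal.ord_lt_ord.mpr hν)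
      have hPj : #(P j) = #(↥T × ↥T) := by rw [hPcard j, hj, Cardinal.card_ord]
      obtain ⟨π⟩ : Nonempty (P j ≃ (↥T × ↥T)) := Cardinal.eq.mp hPj
      set s : P j → A := fun p => sep e a₀ ((π p).1 : B) ((π p).2 : B) with hs
      set k : P j → P j → Bool := fun p i => e ((π p).1 : B) (s i) with hk
      set g : P j → A := fun p => q ((π p).1 : B) with hg
      refine ⟨F j ⟨s, k, g⟩, Set.mem_iUnion.mpr ⟨j, Set.mem_range_self _⟩, ?_⟩
      intro t ht
      have hex : ∃ p, (fun i => e t (s i)) = k p := by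
        refine ⟨π.symm (⟨t, ht⟩, ⟨t, ht⟩), ?_⟩
        funext i
        simp only [hk, hs, Equiv.apply_symm_apply]
      show dpoint e a₀ s k g t = q t
      rw [dpoint, dif_pos hex]
      have hp₀ := hex.choose_spec
      set p₀ := hex.choose with hp₀def
      have htt' : ((π p₀).1 : B) = t := by
        by_contra hne
        have hne' : e ((π p₀).1 : B) ≠ e t := fun hh => hne (e.injective hh)
        have hsep := sep_spec (a₀ := a₀) hne'
        set p' := π.symm ((π p₀).1, ⟨t, ht⟩) with hp'
        have hs' : s p' = sep e a₀ ((π p₀).1 : B) t := by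
          simp only [hs, hp', Equiv.apply_symm_apply]
        have hcong := congrFun hp₀ p'
        simp only [hk] at hcong
        rw [hs'] at hcong
        exact hsep hcong.symm
      show g p₀ = q t
      simp only [hg]
      rw [htt']
  · have hle : #(⋃ j : κ.ord.ToType, Set.range (F j)) ≤ #(κ.ord.ToType) * ⨆ j : κ.ord.ToType, #(Set.range (F j)) :=
      Cardinal.mk_iUnion_le _
    have hsup : (⨆ j : κ.ord.ToType, #(Set.range (F j))) ≤ #A ^< κ := by
      refine ciSup_le' ?_
      intro j
      have hν : #(P j) < κ := hPlt j
      obtain ⟨x, y, hxy⟩ : ∃ x y : A, x ≠ y := Cardinal.two_le_iff.mp h2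
      have fb : Bool ↪ A :=
        ⟨fun b => cond b x y, by
          intro b c hbc
          cases b <;> cases c <;>
            first
            | rfl
            | exact absurd hbc hxy.symm
            | exact absurd hbc hxy⟩
      have e1 : #(P j → A) = #A ^ #(P j) := (Cardinal.power_def _ _).symm
      have e2 : #(P j → P j → Bool) ≤ #(P j → P j → A) :=
        Cardinal.mk_le_of_injective
          (Function.Embedding.arrowCongrRight
            (Function.Embedding.arrowCongrRight fb)).injective
      have e3 : #(P j → P j → A) = (#A ^ #(P j)) ^ #(P j) := by
        rw [← Cardinal.power_def (P j → A) (P j), e1]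
      have hq : #((P j → A) × (P j → P j → Bool) × (P j → A))
          = #(P j → A) * (#(P j → P j → Bool) * #(P j → A)) := by
        simp only [Cardinal.mk_prod, Cardinal.lift_id]
      calc #(Set.range (F j)) ≤ #((P j → A) × (P j → P j → Bool) × (P j → A)) :=
            Cardinal.mk_range_le
        _ = #(P j → A) * (#(P j → P j → Bool) * #(P j → A)) := hq
        _ ≤ (#A ^ #(P j)) * ((#A ^ #(P j)) ^ #(P j) * #A ^ #(P j)) := by
            rw [← e3, ← e1]
            exact mul_le_mul' le_rfl (mul_le_mul' e2 le_rfl)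
        _ = #A ^ (#(P j) + (#(P j) * #(P j) + #(P j))) := by
            rw [Cardinal.power_add, Cardinal.power_add, Cardinal.power_mul]
        _ ≤ #A ^< κ := Cardinal.le_powerlt _
            (Cardinal.add_lt_of_lt hκ hν
              (Cardinal.add_lt_of_lt hκ (Cardinal.mul_lt_of_lt hκ hν hν) hν))
    have hκle : κ ≤ #A ^< κ := by
      by_contra hlt
      push_neg at hlt
      have h1 : #A ^ (#A ^< κ) ≤ #A ^< κ := Cardinal.le_powerlt _ hlt
      have hc : #A ^< κ < 2 ^ (#A ^< κ) := Cardinal.cantor _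
      have h3 : (2 : Cardinal) ^ (#A ^< κ) ≤ #A ^ (#A ^< κ) :=
        Cardinal.power_le_power_right h2
      exact absurd (hc.trans_le (h3.trans h1)) (lt_irrefl _)
    calc #(⋃ j : κ.ord.ToType, Set.range (F j)) ≤ #(κ.ord.ToType) * (#A ^< κ) :=
          hle.trans (mul_le_mul' le_rfl hsup)
      _ = κ * (#A ^< κ) := by rw [hγ]
      _ ≤ (#A ^< κ) * (#A ^< κ) := mul_le_mul' hκle le_rfl
      _ = #A ^< κ := Cardinal.mul_eq_self (hκ.trans hκle)

lemma pow_le_dense [TopologicalSpace A] [DiscreteTopology A] [Nonempty A]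
    {D : Set (B → A)} (hD : @Dense _ (boxTopology κ fun _ => A) D)
    {ν : Cardinal.{u}} (hν : ν < κ) (hνB : ν ≤ #B) : #A ^ ν ≤ #D := by
  classical
  obtain ⟨T, hT⟩ := Cardinal.le_mk_iff_exists_set.mp hνB
  have key : ∀ q : ↥T → A, ∃ d ∈ D, ∀ t : ↥T, d t = q t := by
    intro q
    set q' : B → A := fun b => if h : b ∈ T then q ⟨b, h⟩ else Classical.arbitrary A with hq'
    set V : B → Set A := fun b => if b ∈ T then {q' b} else Set.univ with hV
    have hVsub : {i | V i ≠ Set.univ} ⊆ T := by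
      intro i hi
      by_contra h
      exact hi (by simp only [hV, if_neg h])
    have hVκ : #{i | V i ≠ Set.univ} < κ :=
      lt_of_le_of_lt (mk_le_mk_of_subset hVsub) (hT ▸ hν)
    have hopen := isOpen_box (κ := κ) V hVκ
    have hmemq : q' ∈ Set.pi Set.univ V := by
      rw [Set.mem_univ_pi]
      intro i
      by_cases hi : i ∈ T
      · simp only [hV, if_pos hi]
        exact rfl
      · simp only [hV, if_neg hi]
        trivial
    obtain ⟨d, hd1, hd2⟩ := (@dense_iff_inter_open _ (boxTopology κ fun _ => A) D).mp hD
      _ hopen ⟨q', hmemq⟩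
    refine ⟨d, hd2, ?_⟩
    intro t
    have hdt := (Set.mem_univ_pi.mp hd1) t
    simp only [hV, if_pos t.2] at hdt
    rw [Set.mem_singleton_iff] at hdt
    rw [hdt]
    simp only [hq', dif_pos t.2]
  choose f hfD hf using key
  have hsurj : Function.Surjective
      (fun d : ↥D => (fun t => (d : B → A) t : ↥T → A)) := by
    intro q
    exact ⟨⟨f q, hfD q⟩, funext fun t => hf q t⟩
  have hle := Cardinal.mk_le_of_surjective hsurj
  have hpow : #A ^ ν = #(↥T → A) := by rw [← hT, Cardinal.power_def]
  rw [hpow]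
  exact hle


end Stmt8


open Stmt8 in
theorem stmt8 (α β κ : Cardinal.{u}) (hκ : ℵ₀ ≤ κ) (hκβ : κ ≤ β) (hβ : β ≤ 2 ^ α)
    (A B : Type u) [TopologicalSpace A] [DiscreteTopology A]
    (hA : #A = α) (hB : #B = β) :
    @dens (∀ _ : B, A) (boxTopology κ fun _ => A) = α ^< κ := by
  subst hA
  subst hB
  have hα : ℵ₀ ≤ #A := by
    by_contra h
    push_neg at h
    have h2 : (2 : Cardinal) ^ #A < ℵ₀ :=
      Cardinal.power_lt_aleph0 (Cardinal.lt_aleph0.mpr ⟨2, by norm_num⟩) h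
    exact absurd hκ (not_le.mpr (lt_of_le_of_lt (hκβ.trans hβ) h2))
  haveI : Nonempty A := Cardinal.mk_ne_zero_iff.mp (aleph0_pos.trans_le hα).ne'
  have h2 : (2 : Cardinal) ≤ #A :=
    le_trans (le_of_lt (Cardinal.lt_aleph0.mpr ⟨2, by norm_num⟩)) hα
  obtain ⟨e⟩ : Nonempty (B ↪ (A → Bool)) := by
    rw [← Cardinal.le_def]
    calc #B ≤ 2 ^ #A := hβ
      _ = #(A → Bool) := by
        rw [Cardinal.mk_arrow]
        simp
  obtain ⟨D₀, hD₀dense, hD₀card⟩ := exists_dense_set hκ e h2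
  apply le_antisymm
  · refine le_trans (csInf_le (OrderBot.bddBelow _)
      ⟨D₀, dense_of_boxes hκ hD₀dense, rfl⟩) hD₀card
  · have hne : {c | ∃ D : Set (∀ _ : B, A),
        @Dense _ (boxTopology κ fun _ => A) D ∧ #D = c}.Nonempty :=
      ⟨#(Set.univ : Set (∀ _ : B, A)), Set.univ, @dense_univ _ (boxTopology κ fun _ => A), rfl⟩
    obtain ⟨D, hDdense, hDcard⟩ := csInf_mem hne
    rw [Cardinal.powerlt_le]
    intro ν hν
    have hνB : ν ≤ #B := hν.le.trans hκβ
    calc #A ^ ν ≤ #D := pow_le_dense hDdense hν hνB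
      _ = _ := hDcard
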